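/- Let 𝒜 = I − A⁽ᴺ⁾ ⊗ ⋯ ⊗ A⁽¹⁾ and suppose for each i, zᵢ is a unit vector with A⁽ⁱ⁾A⁽ⁱ⁾ᵀ zᵢ = σ_min²(A⁽ⁱ⁾) zᵢ. Then λ_min(𝒜𝒜ᵀ) ≤ 1 + ∏_{i=1}^N σ_min²(A⁽ⁱ⁾) − 2 ∏_{i=1}^N zᵢᵀ H(A⁽ⁱ⁾) zᵢ. -/
import Mathlib


open Matrix

/-- The spectral norm (largest singular value) of a real matrix, as the operator
norm of the induced map between Euclidean spaces. -/
noncomputable def specNorm {m n : Type*} [Fintype m] [Fintype n] [DecidableEq n]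
    (M : Matrix m n ℝ) : ℝ :=
  ‖LinearMap.toContinuousLinearMap (Matrix.toEuclideanLin M)‖

/-- The smallest singular value of a real matrix: the infimum of `‖Mx‖` over
unit vectors `x`. -/
noncomputable def sigmaMin {m n : Type*} [Fintype m] [Fintype n] [DecidableEq n]
    (M : Matrix m n ℝ) : ℝ :=
  sInf ((fun x => ‖Matrix.toEuclideanLin M x‖) '' Metric.sphere 0 1)

/-- Symmetric part of a square matrix. -/
noncomputable def Hpart {m : Type*} (A : Matrix m m ℝ) : Matrix m m ℝ := (1/2 : ℝ) • (A + Aᵀ)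

/-- The Kronecker product of a finite family of square matrices, realized on the
dependent-product index type. -/
noncomputable def kronFamily {N : ℕ} {n : Fin N → Type*} [∀ i, Fintype (n i)]
    (A : ∀ i, Matrix (n i) (n i) ℝ) : Matrix (∀ i, n i) (∀ i, n i) ℝ :=
  fun a b => ∏ i, A i (a i) (b i)

/-- The largest eigenvalue of a (symmetric) matrix, via the Rayleigh-quotient
characterization: the supremum of `x ⬝ᵥ M x` over unit vectors `x`. -/
noncomputable def lamMax {m : Type*} [Fintype m] (M : Matrix m m ℝ) : ℝ :=
  sSup {r | ∃ x : m → ℝ, x ⬝ᵥ x = 1 ∧ r = x ⬝ᵥ M *ᵥ x}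

/-- The smallest eigenvalue of a (symmetric) matrix, via the Rayleigh-quotient
characterization: the infimum of `x ⬝ᵥ M x` over unit vectors `x`. -/
noncomputable def lamMin {m : Type*} [Fintype m] (M : Matrix m m ℝ) : ℝ :=
  sInf {r | ∃ x : m → ℝ, x ⬝ᵥ x = 1 ∧ r = x ⬝ᵥ M *ᵥ x}


section Aux

variable {N : ℕ} {n : Fin N → Type*} [∀ i, Fintype (n i)] [∀ i, DecidableEq (n i)]

lemma sum_prod_pi (f : ∀ i, n i → ℝ) :
    ∑ a : ∀ i, n i, ∏ i, f i (a i) = ∏ i, ∑ j, f i j := by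
  rw [Finset.prod_univ_sum, Fintype.piFinset_univ]

lemma kron_dot (z w : ∀ i, n i → ℝ) :
    (fun a : ∀ i, n i => ∏ i, z i (a i)) ⬝ᵥ (fun a => ∏ i, w i (a i)) = ∏ i, z i ⬝ᵥ w i := by
  simp only [dotProduct, ← Finset.prod_mul_distrib]
  exact sum_prod_pi (fun i j => z i j * w i j)

lemma kron_mulVec (A : ∀ i, Matrix (n i) (n i) ℝ) (z : ∀ i, n i → ℝ) :
    kronFamily A *ᵥ (fun a => ∏ i, z i (a i)) = fun a => ∏ i, (A i *ᵥ z i) (a i) := by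
  funext a
  simp only [mulVec, dotProduct, kronFamily, ← Finset.prod_mul_distrib]
  exact sum_prod_pi (fun i j => A i (a i) j * z i j)

lemma kron_transpose (A : ∀ i, Matrix (n i) (n i) ℝ) :
    (kronFamily A)ᵀ = kronFamily (fun i => (A i)ᵀ) := by
  funext a b; simp [kronFamily, Matrix.transpose_apply]

end Aux

theorem lamMin_upper_bound {N : ℕ} {n : Fin N → Type*}
    [∀ i, Fintype (n i)] [∀ i, DecidableEq (n i)]
    (A : ∀ i, Matrix (n i) (n i) ℝ) (z : ∀ i, n i → ℝ)
    (hz1 : ∀ i, z i ⬝ᵥ z i = 1)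
    (hz2 : ∀ i, (A i * (A i)ᵀ) *ᵥ z i = (sigmaMin (A i)) ^ 2 • z i) :
    lamMin ((1 - kronFamily A) * (1 - kronFamily A)ᵀ) ≤
      1 + ∏ i, (sigmaMin (A i)) ^ 2 - 2 * ∏ i, z i ⬝ᵥ (Hpart (A i)) *ᵥ (z i) := by
  classical
  set K := kronFamily A with hK
  set x : (∀ i, n i) → ℝ := fun a => ∏ i, z i (a i) with hxdef
  have hx : x ⬝ᵥ x = 1 := by
    rw [hxdef, kron_dot]; simp [hz1]
  have hsym : ∀ i, z i ⬝ᵥ (A i)ᵀ *ᵥ z i = z i ⬝ᵥ A i *ᵥ z i := by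
    intro i
    rw [Matrix.dotProduct_mulVec, Matrix.vecMul_transpose, dotProduct_comm,
      Matrix.dotProduct_mulVec]
  have hH : ∀ i, z i ⬝ᵥ Hpart (A i) *ᵥ z i = z i ⬝ᵥ A i *ᵥ z i := by
    intro i
    simp only [Hpart, Matrix.smul_mulVec, Matrix.add_mulVec, dotProduct_smul,
      dotProduct_add, smul_eq_mul, hsym i]
    ring
  have hKtx : Kᵀ *ᵥ x = fun a => ∏ i, ((A i)ᵀ *ᵥ z i) (a i) := by
    rw [hK, kron_transpose]; exact kron_mulVec _ z
  have hKx : K *ᵥ x = fun a => ∏ i, (A i *ᵥ z i) (a i) := kron_mulVec A z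
  have hAAz : ∀ i, A i *ᵥ ((A i)ᵀ *ᵥ z i) = (sigmaMin (A i)) ^ 2 • z i := by
    intro i
    rw [Matrix.mulVec_mulVec]
    exact hz2 i
  have hKKtx : K *ᵥ (Kᵀ *ᵥ x) = (∏ i, (sigmaMin (A i)) ^ 2) • x := by
    rw [hKtx, hK, kron_mulVec]
    funext a
    simp only [hAAz, Pi.smul_apply, smul_eq_mul, hxdef]
    rw [Finset.prod_mul_distrib]
  -- value of the Rayleigh quotient at x
  have hval : x ⬝ᵥ ((1 - K) * (1 - K)ᵀ) *ᵥ x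
      = 1 + ∏ i, (sigmaMin (A i)) ^ 2 - 2 * ∏ i, z i ⬝ᵥ (Hpart (A i)) *ᵥ (z i) := by
    have h1 : ((1 - K) * (1 - K)ᵀ) *ᵥ x
        = x - Kᵀ *ᵥ x - K *ᵥ x + K *ᵥ (Kᵀ *ᵥ x) := by
      rw [← Matrix.mulVec_mulVec, Matrix.transpose_sub, Matrix.transpose_one,
        Matrix.sub_mulVec, Matrix.one_mulVec, Matrix.sub_mulVec, Matrix.one_mulVec,
        Matrix.mulVec_sub]
      abel
    rw [h1]
    rw [dotProduct_add, dotProduct_sub, dotProduct_sub, hx, hKKtx, hKtx, hKx]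
    have h2 : x ⬝ᵥ (fun a => ∏ i, ((A i)ᵀ *ᵥ z i) (a i)) = ∏ i, z i ⬝ᵥ (A i)ᵀ *ᵥ z i := by
      rw [hxdef]; exact kron_dot z _
    have h3 : x ⬝ᵥ (fun a => ∏ i, (A i *ᵥ z i) (a i)) = ∏ i, z i ⬝ᵥ A i *ᵥ z i := by
      rw [hxdef]; exact kron_dot z _
    rw [h2, h3, dotProduct_smul, hx, smul_eq_mul, mul_one]
    simp only [hH, hsym]
    ring
  have hbdd : BddBelow {r | ∃ y : (∀ i, n i) → ℝ, y ⬝ᵥ y = 1 ∧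
      r = y ⬝ᵥ ((1 - K) * (1 - K)ᵀ) *ᵥ y} := by
    refine ⟨0, ?_⟩
    rintro r ⟨y, -, rfl⟩
    rw [← Matrix.mulVec_mulVec, Matrix.dotProduct_mulVec, ← Matrix.mulVec_transpose]
    exact Finset.sum_nonneg fun i _ => mul_self_nonneg _
  calc lamMin ((1 - K) * (1 - K)ᵀ)
      ≤ x ⬝ᵥ ((1 - K) * (1 - K)ᵀ) *ᵥ x := csInf_le hbdd ⟨x, hx, rfl⟩
    _ = _ := hval
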